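/- Let L be a nonnegative self-adjoint operator on a finite-dimensional normed space such that ‖e^{-sL}‖ ≤ 1 for all s ≥ 0. Then with f_t = Σ_{l=0}^k (tL)^l f/l!, the approximation error satisfies ‖f - e^{-tL} f_t‖ ≤ ‖(tL)^{k+1} f‖ / (k+1)!. -/

import Mathlib

/-- If the heat semigroup of a nonnegative self-adjoint operator `T` is a contraction,
then with `f_t = Σ_{l=0}^k (tT)^l f / l!` one has
`‖f - e^{-tT} f_t‖ ≤ ‖(tT)^{k+1} f‖ / (k+1)!`. -/
theorem stmt_6 {E : Type*} [NormedAddCommGroup E] [InnerProductSpace ℝ E]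
    [FiniteDimensional ℝ E]
    (T : E →L[ℝ] E) (hsa : IsSelfAdjoint T)
    (hpos : ∀ v : E, 0 ≤ (inner ℝ (T v) v : ℝ))
    (hcontr : ∀ s : ℝ, 0 ≤ s → ‖NormedSpace.exp (-(s • T))‖ ≤ 1)
    (t : ℝ) (ht : 0 < t) (k : ℕ) (f : E)
    (ft : E) (hft : ft = ∑ l ∈ Finset.range (k+1), ((l.factorial : ℝ))⁻¹ • (((t • T)^l) f)) :
    ‖f - NormedSpace.exp (-(t • T)) ft‖ ≤ ‖((t • T)^(k+1)) f‖ / ((k+1).factorial : ℝ) := by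
  subst hft
  set A : E →L[ℝ] E := t • T with hA
  set w : E := (A ^ (k+1)) f with hw
  have hM : ∀ s : ℝ, 0 ≤ s → ‖NormedSpace.exp (-(s • A))‖ ≤ 1 := by
    intro s hs
    have h1 : -(s • A) = -((s * t) • T) := by rw [hA, smul_smul]
    rw [h1]
    exact hcontr _ (mul_nonneg hs ht.le)
  set φ : ℝ → E := fun s => NormedSpace.exp (-(s • A))
      (∑ l ∈ Finset.range (k+1), (s ^ l / (l.factorial : ℝ)) • ((A ^ l) f)) with hφ
  have hderiv : ∀ s : ℝ, HasDerivAt φ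
      (-((s ^ k / (k.factorial : ℝ)) • (NormedSpace.exp (-(s • A)) w))) s := by
    intro s
    have hM' : HasDerivAt (fun u : ℝ => NormedSpace.exp (-(u • A)))
        (NormedSpace.exp (-(s • A)) * (-A)) s := by
      have h := hasDerivAt_exp_smul_const (𝕂 := ℝ) (-A) s
      simpa [smul_neg] using h
    have hg : HasDerivAt (fun u : ℝ =>
          ∑ l ∈ Finset.range (k+1), (u ^ l / (l.factorial : ℝ)) • ((A ^ l) f))
        (∑ l ∈ Finset.range k, (s ^ l / (l.factorial : ℝ)) • ((A ^ (l+1)) f)) s := by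
      have h1 : HasDerivAt (fun u : ℝ =>
            ∑ l ∈ Finset.range (k+1), (u ^ l / (l.factorial : ℝ)) • ((A ^ l) f))
          (∑ l ∈ Finset.range (k+1),
            (((l : ℝ) * s ^ (l-1)) / (l.factorial : ℝ)) • ((A ^ l) f)) s := by
        apply HasDerivAt.fun_sum
        intro l _
        exact ((hasDerivAt_pow l s).div_const (l.factorial : ℝ)).smul_const _
      convert h1 using 1
      rw [Finset.sum_range_succ'
        (fun l => (((l : ℝ) * s ^ (l-1)) / (l.factorial : ℝ)) • ((A ^ l) f)) k]
      simp only [Nat.cast_zero, zero_mul, zero_div, zero_smul, add_zero]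
      apply Finset.sum_congr rfl
      intro i _
      congr 1
      have hfac : ((i+1).factorial : ℝ) = ((i+1 : ℕ) : ℝ) * (i.factorial : ℝ) := by
        rw [Nat.factorial_succ]; push_cast; ring
      rw [hfac]
      have h0 : ((i+1 : ℕ) : ℝ) ≠ 0 := by positivity
      have h0' : (i.factorial : ℝ) ≠ 0 := by positivity
      field_simp
      simp
    have key : (∑ l ∈ Finset.range k, (s ^ l / (l.factorial : ℝ)) • ((A ^ (l+1)) f))
        - A (∑ l ∈ Finset.range (k+1), (s ^ l / (l.factorial : ℝ)) • ((A ^ l) f))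
        = -((s ^ k / (k.factorial : ℝ)) • w) := by
      rw [map_sum]
      simp only [map_smul]
      have hAp : ∀ l, A ((A ^ l) f) = (A ^ (l+1)) f := by
        intro l
        rw [pow_succ']
        rfl
      simp only [hAp]
      rw [Finset.sum_range_succ]
      rw [hw]
      abel
    have h := hM'.clm_apply hg
    convert h using 1
    rw [ContinuousLinearMap.mul_apply, ContinuousLinearMap.neg_apply, ← map_add,
      neg_add_eq_sub, key, map_neg, map_smul]
  have hcontG : Continuous (fun s : ℝ =>
      (s ^ k / (k.factorial : ℝ)) • (NormedSpace.exp (-(s • A)) w)) := by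
    apply Continuous.smul
    · exact (continuous_pow k).div_const _
    · exact (ContinuousLinearMap.apply ℝ E w).continuous.comp
        ((continuous_iff_continuousAt.2 fun x =>
          (NormedSpace.exp_analytic (𝕂 := ℝ) x).continuousAt).comp (continuous_id.smul continuous_const).neg)
  have hint : IntervalIntegrable (fun s : ℝ =>
      -((s ^ k / (k.factorial : ℝ)) • (NormedSpace.exp (-(s • A)) w)))
      MeasureTheory.volume 0 1 := hcontG.neg.intervalIntegrable _ _
  have hFTC := intervalIntegral.integral_eq_sub_of_hasDerivAt
    (f := φ) (a := (0:ℝ)) (b := 1) (fun s _ => hderiv s) hint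
  have hφ0 : φ 0 = f := by
    rw [hφ]
    simp only [zero_smul, neg_zero, NormedSpace.exp_zero, ContinuousLinearMap.one_apply]
    rw [Finset.sum_range_succ' (fun l => ((0:ℝ) ^ l / (l.factorial : ℝ)) • ((A ^ l) f)) k]
    simp [zero_pow]
  have hφ1 : φ 1 = NormedSpace.exp (-A)
      (∑ l ∈ Finset.range (k+1), ((l.factorial : ℝ))⁻¹ • ((A ^ l) f)) := by
    rw [hφ]
    simp [one_div]
  have heq : f - NormedSpace.exp (-A)
      (∑ l ∈ Finset.range (k+1), ((l.factorial : ℝ))⁻¹ • ((A ^ l) f))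
      = ∫ s in (0:ℝ)..1, (s ^ k / (k.factorial : ℝ)) • (NormedSpace.exp (-(s • A)) w) := by
    have h5 := hFTC
    rw [hφ0, hφ1, intervalIntegral.integral_neg] at h5
    have h6 := congrArg Neg.neg h5
    rw [neg_neg, neg_sub] at h6
    exact h6.symm
  rw [heq]
  have hbound := intervalIntegral.norm_integral_le_of_norm_le
    (μ := MeasureTheory.volume) (a := (0:ℝ)) (b := 1)
    (f := fun s => (s ^ k / (k.factorial : ℝ)) • (NormedSpace.exp (-(s • A)) w))
    (g := fun s => (‖w‖ / (k.factorial : ℝ)) * s ^ k)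
    zero_le_one ?_ ?_
  · refine hbound.trans ?_
    rw [intervalIntegral.integral_const_mul, integral_pow]
    have hfac : ((k+1).factorial : ℝ) = ((k+1 : ℕ) : ℝ) * (k.factorial : ℝ) := by
      rw [Nat.factorial_succ]; push_cast; ring
    rw [one_pow, zero_pow (by omega : k + 1 ≠ 0)]
    rw [hfac]
    have h1 : (k.factorial : ℝ) ≠ 0 := Nat.cast_ne_zero.mpr k.factorial_ne_zero
    have h2 : ((k+1 : ℕ) : ℝ) ≠ 0 := by positivity
    apply le_of_eq
    push_cast
    rw [div_mul_div_comm, sub_zero, mul_one, mul_comm ((k.factorial : ℝ))]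
  · filter_upwards with s hs
    rw [norm_smul]
    have hs0 : 0 ≤ s := le_of_lt hs.1
    have h1 : ‖NormedSpace.exp (-(s • A)) w‖ ≤ ‖w‖ := by
      calc ‖NormedSpace.exp (-(s • A)) w‖ ≤ ‖NormedSpace.exp (-(s • A))‖ * ‖w‖ :=
            ContinuousLinearMap.le_opNorm _ _
        _ ≤ 1 * ‖w‖ := by
            apply mul_le_mul_of_nonneg_right (hM s hs0) (norm_nonneg _)
        _ = ‖w‖ := one_mul _
    have h2 : ‖s ^ k / (k.factorial : ℝ)‖ = s ^ k / (k.factorial : ℝ) := by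
      rw [Real.norm_eq_abs, abs_of_nonneg (by positivity)]
    rw [h2]
    have h3 : (‖w‖ / (k.factorial : ℝ)) * s ^ k = (s ^ k / (k.factorial : ℝ)) * ‖w‖ := by ring
    rw [h3]
    exact mul_le_mul_of_nonneg_left h1 (by positivity)
  · exact (continuous_const.mul (continuous_pow k)).intervalIntegrable _ _
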